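/- Let 𝓕₁ and 𝓕₂ be finite sets of marked graphs and, for i ∈ {1,2}, let 𝓟ᵢ be the class of graphs that are F-free for every F ∈ 𝓕ᵢ. Then there exists a finite set 𝓕 of marked graphs such that the class of graphs that are F-free for every F ∈ 𝓕 equals 𝓟₁ ∪ 𝓟₂. -/

import Mathlib

/-- The set of vertices at distance at most `r` from `v` in `G`. -/
def ballSet {V : Type*} (G : SimpleGraph V) (r : ℕ) (v : V) : Set V :=
  {u | G.dist v u ≤ r}

lemma center_mem_ballSet {V : Type*} (G : SimpleGraph V) (r : ℕ) (v : V) :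
    v ∈ ballSet G r v := by
  simp [ballSet, SimpleGraph.dist_self]

/-- The `r`-ball of `v` in `G`: the subgraph induced on the vertices at
distance at most `r` from `v`. -/
def ballGraph {V : Type*} (G : SimpleGraph V) (r : ℕ) (v : V) :
    SimpleGraph (ballSet G r v) :=
  G.induce (ballSet G r v)

/-- Isomorphism of pointed graphs. -/
def PtdIso {V W : Type*} (G : SimpleGraph V) (v : V) (H : SimpleGraph W) (w : W) : Prop :=
  ∃ e : G ≃g H, e v = w

/-- The `r`-ball of `v` in `G` has the `r`-type represented by the pointed graph `(H, c)`. -/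
def BallType {V W : Type*} (G : SimpleGraph V) (r : ℕ) (v : V)
    (H : SimpleGraph W) (c : W) : Prop :=
  PtdIso (ballGraph G r v) ⟨v, center_mem_ballSet G r v⟩ H c

/-- Vertex markings of a marked graph. -/
inductive Mark where
  | full
  | semifull
  | part
deriving DecidableEq

/-- A marked graph: a graph together with a marking of each vertex as
'full', 'semifull' or 'partial'. -/
structure MarkedGraph (V : Type*) where
  graph : SimpleGraph V
  mark : V → Mark

/-- The closed neighbourhood `N₁(v) = {v} ∪ N(v)`. -/
def closedNbhd {V : Type*} (G : SimpleGraph V) (v : V) : Set V :=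
  insert v (G.neighborSet v)

/-- An embedding of a marked graph `F` into a graph `G` (Definition 2.1). -/
def IsMarkedEmbedding {V W : Type*} (F : MarkedGraph V) (G : SimpleGraph W)
    (f : V → W) : Prop :=
  Function.Injective f ∧ ∀ v : V,
    (F.mark v = Mark.full → closedNbhd G (f v) = f '' closedNbhd F.graph v) ∧
    (F.mark v = Mark.semifull →
      closedNbhd G (f v) ∩ Set.range f = f '' closedNbhd F.graph v) ∧
    (F.mark v = Mark.part → f '' closedNbhd F.graph v ⊆ closedNbhd G (f v))

section Stmt9Aux

open Classical in
noncomputable instance : Fintype Mark :=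
  ⟨{Mark.full, Mark.semifull, Mark.part}, by intro x; cases x <;> simp⟩

/-- A marked embedding of a marked graph into another *marked* graph, preserving
marks suitably so that it composes with marked embeddings into plain graphs. -/
def MGEmb {A W : Type*} (F₀ : MarkedGraph A) (F : MarkedGraph W) (g : A → W) : Prop :=
  Function.Injective g ∧ ∀ v : A,
    (F₀.mark v = Mark.full → F.mark (g v) = Mark.full ∧
      closedNbhd F.graph (g v) = g '' closedNbhd F₀.graph v) ∧
    (F₀.mark v = Mark.semifull → F.mark (g v) ≠ Mark.part ∧
      closedNbhd F.graph (g v) ∩ Set.range g = g '' closedNbhd F₀.graph v) ∧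
    (F₀.mark v = Mark.part → g '' closedNbhd F₀.graph v ⊆ closedNbhd F.graph (g v))

lemma IsMarkedEmbedding.image_closedNbhd_subset {W V : Type*} {F : MarkedGraph W}
    {G : SimpleGraph V} {f : W → V} (hf : IsMarkedEmbedding F G f) (w : W) :
    f '' closedNbhd F.graph w ⊆ closedNbhd G (f w) := by
  obtain ⟨-, h⟩ := hf
  obtain ⟨h1, h2, h3⟩ := h w
  cases hm : F.mark w with
  | full => exact (h1 hm).symm.subset
  | semifull => exact ((h2 hm).symm.subset).trans Set.inter_subset_left
  | part => exact h3 hm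

/-- Composition: a marked embedding into a marked graph followed by a marked
embedding of that marked graph into a plain graph. -/
lemma MGEmb.comp {A W V : Type*} {F₀ : MarkedGraph A} {F : MarkedGraph W}
    {G : SimpleGraph V} {g : A → W} {f : W → V}
    (hg : MGEmb F₀ F g) (hf : IsMarkedEmbedding F G f) :
    IsMarkedEmbedding F₀ G (f ∘ g) := by
  have hsubf := hf.image_closedNbhd_subset
  obtain ⟨ginj, hgv⟩ := hg
  obtain ⟨finj, hfv⟩ := hf
  refine ⟨finj.comp ginj, fun v => ⟨?_, ?_, ?_⟩⟩
  · intro hm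
    obtain ⟨hmark, hnb⟩ := (hgv v).1 hm
    have hff := (hfv (g v)).1 hmark
    show closedNbhd G (f (g v)) = (f ∘ g) '' _
    rw [Set.image_comp, ← hnb, ← hff]
  · intro hm
    obtain ⟨hmark, hnb⟩ := (hgv v).2.1 hm
    have hr : Set.range (f ∘ g) = f '' Set.range g := Set.range_comp f g
    have key : closedNbhd G (f (g v)) ∩ Set.range (f ∘ g)
        = f '' (closedNbhd F.graph (g v) ∩ Set.range g) := by
      cases hmk : F.mark (g v) with
      | full =>
        calc closedNbhd G (f (g v)) ∩ Set.range (f ∘ g)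
            = f '' closedNbhd F.graph (g v) ∩ f '' Set.range g := by
              rw [(hfv (g v)).1 hmk, hr]
          _ = f '' (closedNbhd F.graph (g v) ∩ Set.range g) := (Set.image_inter finj).symm
      | semifull =>
        have hsub : f '' Set.range g ⊆ Set.range f := Set.image_subset_range f _
        calc closedNbhd G (f (g v)) ∩ Set.range (f ∘ g)
            = closedNbhd G (f (g v)) ∩ Set.range f ∩ f '' Set.range g := by
              rw [hr, Set.inter_assoc, Set.inter_eq_right.mpr hsub]
          _ = f '' closedNbhd F.graph (g v) ∩ f '' Set.range g := by
              rw [(hfv (g v)).2.1 hmk]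
          _ = f '' (closedNbhd F.graph (g v) ∩ Set.range g) := (Set.image_inter finj).symm
      | part => exact absurd hmk hmark
    show closedNbhd G (f (g v)) ∩ Set.range (f ∘ g) = (f ∘ g) '' _
    rw [key, hnb, Set.image_comp]
  · intro hm
    have h := (hgv v).2.2 hm
    show (f ∘ g) '' _ ⊆ closedNbhd G (f (g v))
    rw [Set.image_comp]
    exact (Set.image_mono h).trans (hsubf (g v))

/-- Transport a marked graph along an equivalence of vertex types. -/
def MarkedGraph.comap {W' W : Type*} (F : MarkedGraph W) (e : W' ≃ W) : MarkedGraph W' :=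
  ⟨F.graph.comap e, fun v => F.mark (e v)⟩

@[simp] lemma MarkedGraph.comap_graph {W' W : Type*} (F : MarkedGraph W) (e : W' ≃ W) :
    (F.comap e).graph = F.graph.comap ⇑e := rfl

@[simp] lemma MarkedGraph.comap_mark {W' W : Type*} (F : MarkedGraph W) (e : W' ≃ W)
    (v : W') : (F.comap e).mark v = F.mark (e v) := rfl

lemma closedNbhd_comap {W' W : Type*} (e : W' ≃ W) (G : SimpleGraph W) (v : W') :
    closedNbhd (G.comap ⇑e) v = ⇑e ⁻¹' closedNbhd G (e v) := by
  ext u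
  simp only [closedNbhd, Set.mem_insert_iff, SimpleGraph.mem_neighborSet,
    SimpleGraph.comap_adj, Set.mem_preimage, EmbeddingLike.apply_eq_iff_eq]

lemma image_closedNbhd_comap {W' W : Type*} (e : W' ≃ W) (G : SimpleGraph W) (v : W') :
    ⇑e '' closedNbhd (G.comap ⇑e) v = closedNbhd G (e v) := by
  rw [closedNbhd_comap, Equiv.image_preimage]

lemma IsMarkedEmbedding.comapEquiv {W' W V : Type*} {F : MarkedGraph W}
    {G : SimpleGraph V} {f : W → V} (e : W' ≃ W) (hf : IsMarkedEmbedding F G f) :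
    IsMarkedEmbedding (F.comap e) G (f ∘ ⇑e) := by
  obtain ⟨finj, hfv⟩ := hf
  have him : ∀ (s : Set W'), (f ∘ ⇑e) '' s = f '' (⇑e '' s) := fun s => Set.image_comp f ⇑e s
  have hrange : Set.range (f ∘ ⇑e) = Set.range f := e.surjective.range_comp f
  refine ⟨finj.comp e.injective, fun v => ⟨?_, ?_, ?_⟩⟩
  · intro hm
    have := (hfv (e v)).1 hm
    show closedNbhd G (f (e v)) = _
    rw [him, MarkedGraph.comap_graph, image_closedNbhd_comap]
    exact this
  · intro hm
    have := (hfv (e v)).2.1 hm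
    show closedNbhd G (f (e v)) ∩ Set.range (f ∘ ⇑e) = _
    rw [him, MarkedGraph.comap_graph, image_closedNbhd_comap, hrange]
    exact this
  · intro hm
    have := (hfv (e v)).2.2 hm
    show (f ∘ ⇑e) '' _ ⊆ closedNbhd G (f (e v))
    rw [him, MarkedGraph.comap_graph, image_closedNbhd_comap]
    exact this

lemma MGEmb.comapEquiv {A W' W : Type*} {F₀ : MarkedGraph A} {F : MarkedGraph W}
    {g : A → W} (e : W' ≃ W) (hg : MGEmb F₀ F g) :
    MGEmb F₀ (F.comap e) (⇑e.symm ∘ g) := by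
  obtain ⟨ginj, hgv⟩ := hg
  have hcn : ∀ v : A, closedNbhd (F.comap e).graph (e.symm (g v))
      = ⇑e.symm '' closedNbhd F.graph (g v) := by
    intro v
    rw [MarkedGraph.comap_graph, closedNbhd_comap, e.apply_symm_apply, Equiv.image_eq_preimage_symm, Equiv.symm_symm]
  have him : ∀ (s : Set A), (⇑e.symm ∘ g) '' s = ⇑e.symm '' (g '' s) :=
    fun s => Set.image_comp _ g s
  have hrg : Set.range (⇑e.symm ∘ g) = ⇑e.symm '' Set.range g := Set.range_comp _ g
  refine ⟨e.symm.injective.comp ginj, fun v => ⟨?_, ?_, ?_⟩⟩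
  · intro hm
    obtain ⟨h1, h2⟩ := (hgv v).1 hm
    refine ⟨by simpa using h1, ?_⟩
    show closedNbhd (F.comap e).graph (e.symm (g v)) = _
    rw [hcn v, him, h2]
  · intro hm
    obtain ⟨h1, h2⟩ := (hgv v).2.1 hm
    refine ⟨by simpa using h1, ?_⟩
    show closedNbhd (F.comap e).graph (e.symm (g v)) ∩ Set.range (⇑e.symm ∘ g) = _
    rw [hcn v, him, hrg, ← Set.image_inter e.symm.injective, h2]
  · intro hm
    have h := (hgv v).2.2 hm
    show (⇑e.symm ∘ g) '' _ ⊆ closedNbhd (F.comap e).graph (e.symm (g v))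
    rw [him, hcn v]
    exact Set.image_mono h

lemma image_val_closedNbhd_induce {V : Type*} (G : SimpleGraph V) (S : Set V) (w : S) :
    Subtype.val '' closedNbhd (G.induce S) w = closedNbhd G ↑w ∩ S := by
  ext u
  constructor
  · rintro ⟨x, hx, rfl⟩
    rcases hx with hx | hx
    · rw [hx]; exact ⟨Set.mem_insert _ _, w.2⟩
    · exact ⟨Set.mem_insert_of_mem _ hx, x.2⟩
  · rintro ⟨hu, huS⟩
    refine ⟨⟨u, huS⟩, ?_, rfl⟩
    rcases hu with hu | hu
    · exact Or.inl (Subtype.ext hu)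
    · exact Or.inr hu

/-- The induced subgraph on `S`, with any marking whose full vertices have their
whole closed neighbourhood inside `S`, is marked-embedded in `G` via inclusion. -/
lemma induce_marked_embedding {V : Type*} (G : SimpleGraph V) (S : Set V) (μ : S → Mark)
    (hfull : ∀ w : S, μ w = Mark.full → closedNbhd G ↑w ⊆ S) :
    IsMarkedEmbedding ⟨G.induce S, μ⟩ G Subtype.val := by
  refine ⟨Subtype.val_injective, fun w => ⟨?_, ?_, ?_⟩⟩
  · intro hm
    show closedNbhd G ↑w = _
    rw [image_val_closedNbhd_induce, Set.inter_eq_left.mpr (hfull w hm)]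
  · intro _
    show closedNbhd G ↑w ∩ Set.range Subtype.val = _
    rw [image_val_closedNbhd_induce, Subtype.range_val]
  · intro _
    rw [image_val_closedNbhd_induce]
    exact Set.inter_subset_left

/-- One side of the merge construction: an embedded copy of `FA` in `G` yields a
marked-graph embedding of `FA` into the induced marked graph on any `S` containing
its image, provided images of full vertices are marked full and images of semifull
vertices are not marked partial. -/
lemma merge_side {A V : Type*} {FA : MarkedGraph A} {G : SimpleGraph V} {f : A → V}
    (hf : IsMarkedEmbedding FA G f) (S : Set V) (hS : Set.range f ⊆ S)
    (μ : S → Mark)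
    (hfull : ∀ v, FA.mark v = Mark.full → ∀ h : f v ∈ S, μ ⟨f v, h⟩ = Mark.full)
    (hsemi : ∀ v, FA.mark v = Mark.semifull → ∀ h : f v ∈ S, μ ⟨f v, h⟩ ≠ Mark.part) :
    MGEmb FA ⟨G.induce S, μ⟩ (fun v => (⟨f v, hS ⟨v, rfl⟩⟩ : S)) := by
  obtain ⟨finj, hfv⟩ := hf
  set g : A → S := fun v => (⟨f v, hS ⟨v, rfl⟩⟩ : S) with hg
  have hvg : Subtype.val ∘ g = f := rfl
  have hginj : Function.Injective g := fun a b hab => finj (congrArg Subtype.val hab)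
  have hvinj : Function.Injective (Subtype.val : S → V) := Subtype.val_injective
  have himinj := Set.image_injective.mpr hvinj
  have hims : ∀ s : Set A, Subtype.val '' (g '' s) = f '' s := by
    intro s; rw [← Set.image_comp, hvg]
  have hrg : Subtype.val '' Set.range g = Set.range f := by
    rw [← Set.range_comp, hvg]
  refine ⟨hginj, fun v => ⟨?_, ?_, ?_⟩⟩
  · intro hm
    refine ⟨hfull v hm _, himinj ?_⟩
    show Subtype.val '' closedNbhd (G.induce S) (g v) = _
    rw [image_val_closedNbhd_induce, hims]
    have h1 := (hfv v).1 hm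
    show closedNbhd G (f v) ∩ S = f '' closedNbhd FA.graph v
    rw [h1]
    exact Set.inter_eq_left.mpr ((Set.image_subset_range f _).trans hS)
  · intro hm
    refine ⟨hsemi v hm _, himinj ?_⟩
    rw [Set.image_inter hvinj, hims, hrg]
    show Subtype.val '' closedNbhd (G.induce S) (g v) ∩ Set.range f = _
    rw [image_val_closedNbhd_induce]
    have h1 := (hfv v).2.1 hm
    show closedNbhd G (f v) ∩ S ∩ Set.range f = f '' closedNbhd FA.graph v
    rw [Set.inter_assoc, Set.inter_eq_right.mpr (hS.trans Set.Subset.rfl)]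
    · exact h1
  · intro hm
    rw [← Set.image_subset_image_iff hvinj, hims]
    show f '' closedNbhd FA.graph v ⊆ Subtype.val '' closedNbhd (G.induce S) (g v)
    rw [image_val_closedNbhd_induce]
    exact Set.subset_inter ((hfv v).2.2 hm)
      ((Set.image_subset_range f _).trans hS)

/-- Disjoint union of two graphs. -/
def sumGraph {α β : Type*} (G₁ : SimpleGraph α) (G₂ : SimpleGraph β) :
    SimpleGraph (α ⊕ β) where
  Adj a b := match a, b with
    | Sum.inl x, Sum.inl y => G₁.Adj x y
    | Sum.inr x, Sum.inr y => G₂.Adj x y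
    | _, _ => False
  symm := by refine ⟨?_⟩; rintro (x | x) (y | y) h <;> first | exact h.elim | exact h.symm
  loopless := by
    refine ⟨?_⟩; rintro (x | x) h
    · exact G₁.irrefl h
    · exact G₂.irrefl h

/-- Disjoint union of two marked graphs. -/
def sumMarked {α β : Type*} (F₁ : MarkedGraph α) (F₂ : MarkedGraph β) :
    MarkedGraph (α ⊕ β) :=
  ⟨sumGraph F₁.graph F₂.graph, Sum.elim F₁.mark F₂.mark⟩

lemma closedNbhd_sum_inl {α β : Type*} (G₁ : SimpleGraph α) (G₂ : SimpleGraph β) (v : α) :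
    closedNbhd (sumGraph G₁ G₂) (Sum.inl v) = Sum.inl '' closedNbhd G₁ v := by
  ext (u | u) <;>
    simp [closedNbhd, sumGraph, Set.mem_insert_iff]

lemma closedNbhd_sum_inr {α β : Type*} (G₁ : SimpleGraph α) (G₂ : SimpleGraph β) (v : β) :
    closedNbhd (sumGraph G₁ G₂) (Sum.inr v) = Sum.inr '' closedNbhd G₂ v := by
  ext (u | u) <;>
    simp [closedNbhd, sumGraph, Set.mem_insert_iff]

lemma sumMGEmb_inl {α β : Type*} (F₁ : MarkedGraph α) (F₂ : MarkedGraph β) :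
    MGEmb F₁ (sumMarked F₁ F₂) Sum.inl := by
  refine ⟨Sum.inl_injective, fun v => ⟨?_, ?_, ?_⟩⟩
  · intro hm
    exact ⟨hm, closedNbhd_sum_inl _ _ v⟩
  · intro hm
    refine ⟨by simp [sumMarked, hm], ?_⟩
    rw [show (sumMarked F₁ F₂).graph = sumGraph F₁.graph F₂.graph from rfl,
      closedNbhd_sum_inl]
    exact Set.inter_eq_left.mpr (Set.image_subset_range _ _)
  · intro _
    rw [show (sumMarked F₁ F₂).graph = sumGraph F₁.graph F₂.graph from rfl,
      closedNbhd_sum_inl]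
lemma sumMGEmb_inr {α β : Type*} (F₁ : MarkedGraph α) (F₂ : MarkedGraph β) :
    MGEmb F₂ (sumMarked F₁ F₂) Sum.inr := by
  refine ⟨Sum.inr_injective, fun v => ⟨?_, ?_, ?_⟩⟩
  · intro hm
    exact ⟨hm, closedNbhd_sum_inr _ _ v⟩
  · intro hm
    refine ⟨by simp [sumMarked, hm], ?_⟩
    rw [show (sumMarked F₁ F₂).graph = sumGraph F₁.graph F₂.graph from rfl,
      closedNbhd_sum_inr]
    exact Set.inter_eq_left.mpr (Set.image_subset_range _ _)
  · intro _
    rw [show (sumMarked F₁ F₂).graph = sumGraph F₁.graph F₂.graph from rfl,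
      closedNbhd_sum_inr]

/-- The qualifying predicate for indices of the family built in `stmt9`: the
candidate marked graph on `Fin m` receives marked-graph embeddings of both
`F₁ i` and `F₂ j`. -/
def stmt9P {n₁ n₂ : ℕ} {U₁ : Fin n₁ → Type} {U₂ : Fin n₂ → Type}
    (F₁ : ∀ i, MarkedGraph (U₁ i)) (F₂ : ∀ i, MarkedGraph (U₂ i)) {M : ℕ}
    (idx : (Fin n₁ × Fin n₂) × Σ m : Fin (M + 1), SimpleGraph (Fin m) × (Fin m → Mark)) :
    Prop :=
  (∃ g : U₁ idx.1.1 → Fin idx.2.1, MGEmb (F₁ idx.1.1) ⟨idx.2.2.1, idx.2.2.2⟩ g) ∧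
  (∃ g : U₂ idx.1.2 → Fin idx.2.1, MGEmb (F₂ idx.1.2) ⟨idx.2.2.1, idx.2.2.2⟩ g)

open Classical in
/-- The marked graph attached to an index in the family built in `stmt9`. -/
noncomputable def stmt9Aux {n₁ n₂ : ℕ} {U₁ : Fin n₁ → Type} {U₂ : Fin n₂ → Type}
    [∀ i, Fintype (U₁ i)] [∀ i, Fintype (U₂ i)]
    (F₁ : ∀ i, MarkedGraph (U₁ i)) (F₂ : ∀ i, MarkedGraph (U₂ i)) (M : ℕ)
    (idx : (Fin n₁ × Fin n₂) × Σ m : Fin (M + 1), SimpleGraph (Fin m) × (Fin m → Mark)) :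
    Σ' (α : Type), Fintype α × MarkedGraph α :=
  if stmt9P F₁ F₂ idx
  then ⟨Fin idx.2.1, inferInstance, ⟨idx.2.2.1, idx.2.2.2⟩⟩
  else ⟨U₁ idx.1.1 ⊕ U₂ idx.1.2, inferInstance, sumMarked (F₁ idx.1.1) (F₂ idx.1.2)⟩

lemma stmt9Aux_pos {n₁ n₂ : ℕ} {U₁ : Fin n₁ → Type} {U₂ : Fin n₂ → Type}
    [∀ i, Fintype (U₁ i)] [∀ i, Fintype (U₂ i)]
    (F₁ : ∀ i, MarkedGraph (U₁ i)) (F₂ : ∀ i, MarkedGraph (U₂ i)) (M : ℕ)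
    (idx : (Fin n₁ × Fin n₂) × Σ m : Fin (M + 1), SimpleGraph (Fin m) × (Fin m → Mark))
    (h : stmt9P F₁ F₂ idx) :
    stmt9Aux F₁ F₂ M idx = ⟨Fin idx.2.1, inferInstance, ⟨idx.2.2.1, idx.2.2.2⟩⟩ := by
  unfold stmt9Aux
  rw [if_pos h]

lemma stmt9Aux_g1 {n₁ n₂ : ℕ} {U₁ : Fin n₁ → Type} {U₂ : Fin n₂ → Type}
    [∀ i, Fintype (U₁ i)] [∀ i, Fintype (U₂ i)]
    (F₁ : ∀ i, MarkedGraph (U₁ i)) (F₂ : ∀ i, MarkedGraph (U₂ i)) (M : ℕ)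
    (idx : (Fin n₁ × Fin n₂) × Σ m : Fin (M + 1), SimpleGraph (Fin m) × (Fin m → Mark)) :
    ∃ g : U₁ idx.1.1 → (stmt9Aux F₁ F₂ M idx).1,
      MGEmb (F₁ idx.1.1) (stmt9Aux F₁ F₂ M idx).2.2 g := by
  by_cases h : stmt9P F₁ F₂ idx
  · rw [stmt9Aux_pos F₁ F₂ M idx h]
    exact h.1
  · unfold stmt9Aux
    rw [if_neg h]
    exact ⟨Sum.inl, sumMGEmb_inl _ _⟩

lemma stmt9Aux_g2 {n₁ n₂ : ℕ} {U₁ : Fin n₁ → Type} {U₂ : Fin n₂ → Type}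
    [∀ i, Fintype (U₁ i)] [∀ i, Fintype (U₂ i)]
    (F₁ : ∀ i, MarkedGraph (U₁ i)) (F₂ : ∀ i, MarkedGraph (U₂ i)) (M : ℕ)
    (idx : (Fin n₁ × Fin n₂) × Σ m : Fin (M + 1), SimpleGraph (Fin m) × (Fin m → Mark)) :
    ∃ g : U₂ idx.1.2 → (stmt9Aux F₁ F₂ M idx).1,
      MGEmb (F₂ idx.1.2) (stmt9Aux F₁ F₂ M idx).2.2 g := by
  by_cases h : stmt9P F₁ F₂ idx
  · rw [stmt9Aux_pos F₁ F₂ M idx h]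
    exact h.2
  · unfold stmt9Aux
    rw [if_neg h]
    exact ⟨Sum.inr, sumMGEmb_inr _ _⟩

end Stmt9Aux

/-- Claim 3.6: for finite sets `𝓕₁, 𝓕₂` of (finite) marked graphs
there is a finite set `𝓕` of marked graphs such that a graph is `𝓕`-free iff it
is `𝓕₁`-free or `𝓕₂`-free. -/
theorem stmt9 (n₁ n₂ : ℕ) (U₁ : Fin n₁ → Type) (U₂ : Fin n₂ → Type)
    [∀ i, Fintype (U₁ i)] [∀ i, Fintype (U₂ i)]
    (F₁ : ∀ i, MarkedGraph (U₁ i)) (F₂ : ∀ i, MarkedGraph (U₂ i)) :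
    ∃ (n : ℕ) (U : Fin n → Type) (_ : ∀ i, Fintype (U i)) (F : ∀ i, MarkedGraph (U i)),
      ∀ (V : Type) (G : SimpleGraph V),
        (∀ i (f : U i → V), ¬ IsMarkedEmbedding (F i) G f) ↔
        ((∀ i (f : U₁ i → V), ¬ IsMarkedEmbedding (F₁ i) G f) ∨
         (∀ i (f : U₂ i → V), ¬ IsMarkedEmbedding (F₂ i) G f)) := by
  classical
  set M : ℕ := (Finset.univ.sup fun i => Fintype.card (U₁ i)) +
      (Finset.univ.sup fun j => Fintype.card (U₂ j)) with hMdef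
  haveI : Fintype ((Fin n₁ × Fin n₂) ×
      Σ m : Fin (M + 1), SimpleGraph (Fin m) × (Fin m → Mark)) := inferInstance
  set I := (Fin n₁ × Fin n₂) ×
      Σ m : Fin (M + 1), SimpleGraph (Fin m) × (Fin m → Mark) with hIdef
  let eI : I ≃ Fin (Fintype.card I) := Fintype.equivFin I
  refine ⟨Fintype.card I, fun k => (stmt9Aux F₁ F₂ M (eI.symm k)).1,
    fun k => (stmt9Aux F₁ F₂ M (eI.symm k)).2.1,
    fun k => (stmt9Aux F₁ F₂ M (eI.symm k)).2.2, ?_⟩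
  intro V G
  constructor
  · -- if `𝓕`-free then `𝓕₁`-free or `𝓕₂`-free
    intro hfree
    by_contra hcon
    push_neg at hcon
    obtain ⟨h1, h2⟩ := hcon
    obtain ⟨i, f₁, hf₁⟩ := h1
    obtain ⟨j, f₂, hf₂⟩ := h2
    -- merge the two embedded copies
    set S : Set V := Set.range f₁ ∪ Set.range f₂ with hSdef
    haveI : Fintype S := ((Set.finite_range f₁).union (Set.finite_range f₂)).fintype
    set μ : S → Mark := fun w =>
      if (∃ v, (F₁ i).mark v = Mark.full ∧ f₁ v = ↑w) ∨
         (∃ v, (F₂ j).mark v = Mark.full ∧ f₂ v = ↑w)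
      then Mark.full
      else if (∃ v, (F₁ i).mark v = Mark.semifull ∧ f₁ v = ↑w) ∨
              (∃ v, (F₂ j).mark v = Mark.semifull ∧ f₂ v = ↑w)
      then Mark.semifull else Mark.part with hμdef
    have hμfull : ∀ w : S, μ w = Mark.full → closedNbhd G ↑w ⊆ S := by
      intro w hw
      simp only [hμdef] at hw
      split at hw
      · next hc =>
        rcases hc with ⟨v, hv, hfv⟩ | ⟨v, hv, hfv⟩
        · rw [← hfv, (hf₁.2 v).1 hv]
          exact (Set.image_subset_range _ _).trans Set.subset_union_left
        · rw [← hfv, (hf₂.2 v).1 hv]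
          exact (Set.image_subset_range _ _).trans Set.subset_union_right
      · split at hw
        · exact absurd hw (by decide)
        · exact absurd hw (by decide)
    have hfull₁ : ∀ v, (F₁ i).mark v = Mark.full →
        ∀ h : f₁ v ∈ S, μ ⟨f₁ v, h⟩ = Mark.full := by
      intro v hv h
      simp only [hμdef]
      rw [if_pos (Or.inl ⟨v, hv, rfl⟩)]
    have hsemi₁ : ∀ v, (F₁ i).mark v = Mark.semifull →
        ∀ h : f₁ v ∈ S, μ ⟨f₁ v, h⟩ ≠ Mark.part := by
      intro v hv h
      simp only [hμdef]
      split
      · decide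
      · rw [if_pos (Or.inl ⟨v, hv, rfl⟩)]
        decide
    have hfull₂ : ∀ v, (F₂ j).mark v = Mark.full →
        ∀ h : f₂ v ∈ S, μ ⟨f₂ v, h⟩ = Mark.full := by
      intro v hv h
      simp only [hμdef]
      rw [if_pos (Or.inr ⟨v, hv, rfl⟩)]
    have hsemi₂ : ∀ v, (F₂ j).mark v = Mark.semifull →
        ∀ h : f₂ v ∈ S, μ ⟨f₂ v, h⟩ ≠ Mark.part := by
      intro v hv h
      simp only [hμdef]
      split
      · decide
      · rw [if_pos (Or.inr ⟨v, hv, rfl⟩)]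
        decide
    have hembS : IsMarkedEmbedding ⟨G.induce S, μ⟩ G Subtype.val :=
      induce_marked_embedding G S μ hμfull
    have hg₁ := merge_side hf₁ S Set.subset_union_left μ hfull₁ hsemi₁
    have hg₂ := merge_side hf₂ S Set.subset_union_right μ hfull₂ hsemi₂
    -- size bound
    have hcard : Fintype.card S ≤ M := by
      have hr1 : (Set.range f₁).ncard ≤ Fintype.card (U₁ i) := by
        rw [← Nat.card_coe_set_eq, ← Nat.card_eq_fintype_card]
        exact Finite.card_range_le f₁
      have hr2 : (Set.range f₂).ncard ≤ Fintype.card (U₂ j) := by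
        rw [← Nat.card_coe_set_eq, ← Nat.card_eq_fintype_card]
        exact Finite.card_range_le f₂
      have h3 : Fintype.card S = (Set.range f₁ ∪ Set.range f₂).ncard := by
        rw [← Nat.card_coe_set_eq, Nat.card_eq_fintype_card]
      calc Fintype.card S = (Set.range f₁ ∪ Set.range f₂).ncard := h3
        _ ≤ (Set.range f₁).ncard + (Set.range f₂).ncard := Set.ncard_union_le _ _
        _ ≤ Fintype.card (U₁ i) + Fintype.card (U₂ j) := add_le_add hr1 hr2
        _ ≤ M := add_le_add
            (Finset.le_sup (f := fun i => Fintype.card (U₁ i)) (Finset.mem_univ i))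
            (Finset.le_sup (f := fun j => Fintype.card (U₂ j)) (Finset.mem_univ j))
    let e : Fin (Fintype.card S) ≃ S := (Fintype.equivFin S).symm
    let F' : MarkedGraph (Fin (Fintype.card S)) :=
      MarkedGraph.comap ⟨G.induce S, μ⟩ e
    have hF'emb : IsMarkedEmbedding F' G (Subtype.val ∘ ⇑e) :=
      IsMarkedEmbedding.comapEquiv e hembS
    have hF'g₁ := MGEmb.comapEquiv e hg₁
    have hF'g₂ := MGEmb.comapEquiv e hg₂
    let mfin : Fin (M + 1) := ⟨Fintype.card S, Nat.lt_succ_of_le hcard⟩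
    let idx : I := ((i, j), ⟨mfin, (F'.graph, F'.mark)⟩)
    have hP : stmt9P F₁ F₂ idx := ⟨⟨_, hF'g₁⟩, ⟨_, hF'g₂⟩⟩
    have hT := stmt9Aux_pos F₁ F₂ M idx hP
    have h := hfree (eI idx)
    beta_reduce at h
    rw [Equiv.symm_apply_apply] at h
    rw [hT] at h
    exact h (Subtype.val ∘ ⇑e) hF'emb
  · rintro (h | h) k f hemb
    · obtain ⟨g, hg⟩ := stmt9Aux_g1 F₁ F₂ M (eI.symm k)
      exact h _ _ (hg.comp hemb)
    · obtain ⟨g, hg⟩ := stmt9Aux_g2 F₁ F₂ M (eI.symm k)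
      exact h _ _ (hg.comp hemb)
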